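/- Let c ∈ ℂ^{ℤ_d×ℤ_d} satisfy (i) c_{jk} = ω^{-jk}·conj(c_{-j,-k}) for all j,k, (ii) c_{00} = 1, (iii) |c_{jk}|² = 1/(d+1) for all (j,k) ≠ (0,0), and (iv) trace((Tc)⁴) = 1. Then Tc is a rank-one orthogonal projection: there exists a unit vector v ∈ ℂ^d with Tc = vv*; equivalently, the characteristic polynomial of Tc is λ^d − λ^{d−1}, i.e., Tc has eigenvalue 1 with multiplicity one and eigenvalue 0 with multiplicity d−1. -/

import Mathlib

set_option linter.unusedSectionVars false
set_option linter.unusedVariables false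
set_option maxHeartbeats 1600000


open Matrix Complex

/-- `ω = exp(2πi/d)`, a primitive `d`-th root of unity. -/
noncomputable def omegaRoot (d : ℕ) : ℂ := Complex.exp (2 * Real.pi * Complex.I / d)

/-- The cyclic shift matrix `S`, `S_{jk} = δ_{j,k+1}`. -/
def Smat (d : ℕ) [NeZero d] : Matrix (ZMod d) (ZMod d) ℂ :=
  Matrix.of fun j k => if j = k + 1 then 1 else 0

/-- The modulation matrix `Ω`, `Ω_{jk} = ω^j δ_{jk}`. -/
noncomputable def Omat (d : ℕ) [NeZero d] : Matrix (ZMod d) (ZMod d) ℂ :=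
  Matrix.of fun j k => if j = k then omegaRoot d ^ j.val else 0

/-- The reconstruction operator `T`, `Tc = (1/d) Σ_{j,k} c_{jk} (S^j Ω^k)^*`. -/
noncomputable def Trec (d : ℕ) [NeZero d] (c : Matrix (ZMod d) (ZMod d) ℂ) :
    Matrix (ZMod d) (ZMod d) ℂ :=
  (1 / (d : ℂ)) • ∑ j : ZMod d, ∑ k : ZMod d, c j k • (Smat d ^ j.val * Omat d ^ k.val)ᴴ

variable (d : ℕ) [NeZero d]

lemma omega_prim : IsPrimitiveRoot (omegaRoot d) d :=
  Complex.isPrimitiveRoot_exp d (NeZero.ne d)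

lemma omega_ne_zero : omegaRoot d ≠ 0 := Complex.exp_ne_zero _

lemma omega_pow_d : omegaRoot d ^ d = 1 := (omega_prim d).pow_eq_one

lemma omega_zpow_congr {a b : ℤ} (h : (a : ZMod d) = b) :
    omegaRoot d ^ a = omegaRoot d ^ b := by
  have hdvd : (d : ℤ) ∣ a - b := by
    have := (ZMod.intCast_eq_intCast_iff a b d).mp h
    exact (Int.ModEq.dvd this.symm)
  obtain ⟨q, hq⟩ := hdvd
  have ha : a = b + d * q := by linarith
  rw [ha, zpow_add₀ (omega_ne_zero d), _root_.zpow_mul, zpow_natCast, omega_pow_d, _root_.one_zpow, mul_one]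

lemma sum_omega_pow (t : ZMod d) :
    ∑ m : ZMod d, omegaRoot d ^ (t.val * m.val) = if t = 0 then (d : ℂ) else 0 := by
  have hsum : ∑ m : ZMod d, omegaRoot d ^ (t.val * m.val)
      = ∑ i ∈ Finset.range d, (omegaRoot d ^ t.val) ^ i := by
    rw [Finset.sum_bij' (i := fun (m : ZMod d) _ => m.val) (j := fun (i : ℕ) _ => (i : ZMod d))]
    · intro m _; exact Finset.mem_range.mpr (ZMod.val_lt m)
    · intro i hi; exact Finset.mem_univ _
    · intro m _; exact ZMod.natCast_rightInverse m
    · intro i hi; exact ZMod.val_cast_of_lt (Finset.mem_range.mp hi)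
    · intro m _; rw [← pow_mul]
  rw [hsum]
  by_cases h1 : omegaRoot d ^ t.val = 1
  · have : d ∣ t.val := (omega_prim d).pow_eq_one_iff_dvd _ |>.mp h1
    have ht : t = 0 := by
      have := Nat.eq_zero_of_dvd_of_lt this (ZMod.val_lt t)
      · exact (ZMod.val_eq_zero t).mp this
    simp [ht, h1]
  · have ht : ¬ t = 0 := by
      rintro rfl
      simp at h1
    rw [geom_sum_eq h1]
    have : (omegaRoot d ^ t.val) ^ d = 1 := by
      rw [← pow_mul, mul_comm, pow_mul, omega_pow_d, one_pow]
    simp [this, ht]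

lemma Spow_apply (p : ℕ) (m n : ZMod d) :
    (Smat d ^ p) m n = if m = n + p then 1 else 0 := by
  induction p generalizing m n with
  | zero => simp [Matrix.one_apply, eq_comm]
  | succ p ih =>
    rw [pow_succ, Matrix.mul_apply]
    rw [Finset.sum_eq_single (n + 1)]
    · have hS : Smat d (n + 1) n = 1 := by simp [Smat]
      have harg : (n + 1 : ZMod d) + ((p : ℕ) : ZMod d) = n + (((p + 1 : ℕ) : ℕ) : ZMod d) := by
        push_cast; ring
      rw [hS, mul_one, ih, harg]
    · intro b _ hb
      have hS : Smat d b n = 0 := by simp [Smat, hb]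
      rw [hS, mul_zero]
    · intro h; exact absurd (Finset.mem_univ _) h

lemma Omat_eq : Omat d = Matrix.diagonal (fun j : ZMod d => omegaRoot d ^ j.val) := by
  ext m n
  by_cases h : m = n <;> simp [Omat, Matrix.diagonal_apply, h]

lemma Opow_apply (p : ℕ) :
    Omat d ^ p = Matrix.diagonal (fun j : ZMod d => omegaRoot d ^ (j.val * p)) := by
  rw [Omat_eq, Matrix.diagonal_pow]
  have hfun : ((fun j : ZMod d => omegaRoot d ^ j.val) ^ p) = fun j => omegaRoot d ^ (j.val * p) := by
    funext j
    rw [Pi.pow_apply, ← pow_mul]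
  rw [hfun]

lemma conj_omega_pow (a : ℕ) :
    (starRingEnd ℂ) (omegaRoot d ^ a) = omegaRoot d ^ (-(a : ℤ)) := by
  have h1 : (starRingEnd ℂ) (omegaRoot d) = (omegaRoot d)⁻¹ := by
    rw [omegaRoot, ← Complex.exp_conj, ← Complex.exp_neg]
    congr 1
    simp [map_div₀, Complex.conj_I, map_ofNat]
    ring
  rw [map_pow, h1, inv_pow, ← zpow_natCast, ← _root_.zpow_neg]

lemma Trec_apply (c : Matrix (ZMod d) (ZMod d) ℂ) (m n : ZMod d) :
    Trec d c m n
      = (1 / (d : ℂ)) * ∑ k : ZMod d, c (n - m) k * omegaRoot d ^ (-((m.val * k.val : ℕ) : ℤ)) := by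
  have key : ∀ j k : ZMod d, (Smat d ^ j.val * Omat d ^ k.val)ᴴ m n
      = if j = n - m then omegaRoot d ^ (-((m.val * k.val : ℕ) : ℤ)) else 0 := by
    intro j k
    rw [Matrix.conjTranspose_apply, Opow_apply, Matrix.mul_diagonal, Spow_apply]
    by_cases h : n = m + j.val
    · rw [if_pos h, if_pos, one_mul, star_def, conj_omega_pow]
      · rw [eq_sub_iff_add_eq, add_comm]
        rw [h]; push_cast [ZMod.natCast_val, ZMod.cast_id]; ring
    · rw [if_neg h, zero_mul, if_neg, star_zero]
      intro hc
      exact h (by rw [hc]; push_cast [ZMod.natCast_val, ZMod.cast_id]; ring)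
  rw [Trec, Matrix.smul_apply, Matrix.sum_apply, smul_eq_mul]
  congr 1
  rw [Finset.sum_eq_single (n - m)]
  · simp only [Matrix.sum_apply, Matrix.smul_apply, smul_eq_mul, key, if_pos rfl, if_true]
  · intro j _ hj
    simp only [Matrix.sum_apply, Matrix.smul_apply, smul_eq_mul, key, if_neg hj, mul_zero,
      Finset.sum_const_zero]
  · intro h; exact absurd (Finset.mem_univ _) h

lemma conj_omega : (starRingEnd ℂ) (omegaRoot d) = (omegaRoot d)⁻¹ := by
  rw [omegaRoot, ← Complex.exp_conj, ← Complex.exp_neg]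
  congr 1
  simp [map_div₀, Complex.conj_I, map_ofNat]
  ring

lemma conj_omega_zpow (a : ℤ) :
    (starRingEnd ℂ) (omegaRoot d ^ a) = omegaRoot d ^ (-a) := by
  rw [map_zpow₀, conj_omega, _root_.inv_zpow, ← _root_.zpow_neg]


lemma Trec_isHermitian (c : Matrix (ZMod d) (ZMod d) ℂ)
    (h1 : ∀ j k : ZMod d,
      c j k = omegaRoot d ^ (-((j.val : ℤ) * (k.val : ℤ))) * (starRingEnd ℂ) (c (-j) (-k))) :
    (Trec d c).IsHermitian := by
  show (Trec d c)ᴴ = Trec d c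
  ext m n
  rw [Matrix.conjTranspose_apply, Trec_apply, Trec_apply]
  rw [star_def, _root_.map_mul, map_sum]
  have hd : (starRingEnd ℂ) (1 / (d : ℂ)) = 1 / (d : ℂ) := by
    simp [map_div₀, Complex.conj_natCast]
  rw [hd]
  congr 1
  refine Fintype.sum_equiv (Equiv.neg (ZMod d)) _ _ (fun x => ?_)
  show (starRingEnd ℂ) (c (m - n) x * omegaRoot d ^ (-((n.val * x.val : ℕ) : ℤ)))
      = c (n - m) (-x) * omegaRoot d ^ (-((m.val * (-x : ZMod d).val : ℕ) : ℤ))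
  rw [_root_.map_mul, conj_omega_zpow, neg_neg]
  have hh := h1 (n - m) (-x)
  rw [neg_sub, neg_neg] at hh
  rw [hh]
  rw [mul_comm (omegaRoot d ^ (-((((n - m).val : ℤ)) * (((-x : ZMod d).val : ℤ)))))
    ((starRingEnd ℂ) (c (m - n) x)), mul_assoc, ← zpow_add₀ (omega_ne_zero d)]
  congr 1
  apply omega_zpow_congr
  push_cast [ZMod.natCast_val, ZMod.cast_id]
  ring

lemma Trec_trace (c : Matrix (ZMod d) (ZMod d) ℂ) : (Trec d c).trace = c 0 0 := by
  have hd : (d : ℂ) ≠ 0 := Nat.cast_ne_zero.mpr (NeZero.ne d)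
  rw [Matrix.trace]
  simp only [Matrix.diag_apply, Trec_apply, sub_self]
  rw [← Finset.mul_sum, Finset.sum_comm]
  have hswap : ∀ k : ZMod d, ∑ m : ZMod d, c 0 k * omegaRoot d ^ (-((m.val * k.val : ℕ) : ℤ))
      = c 0 k * (if (-k : ZMod d) = 0 then (d : ℂ) else 0) := by
    intro k
    rw [← Finset.mul_sum]
    congr 1
    rw [← sum_omega_pow d (-k)]
    refine Finset.sum_congr rfl (fun m _ => ?_)
    rw [← zpow_natCast (omegaRoot d) ((-k).val * m.val)]
    apply omega_zpow_congr
    push_cast [ZMod.natCast_val, ZMod.cast_id]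
    ring
  rw [Finset.sum_congr rfl (fun k _ => hswap k)]
  rw [Finset.sum_eq_single 0]
  · rw [if_pos (by simp)]
    field_simp
  · intro b _ hb
    rw [if_neg (by simpa using hb), mul_zero]
  · intro h; exact absurd (Finset.mem_univ _) h

lemma Trec_mul_conj_trace (c : Matrix (ZMod d) (ZMod d) ℂ) :
    (Trec d c * (Trec d c)ᴴ).trace
      = (1 / (d : ℂ)) * ∑ t : ZMod d, ∑ k : ZMod d, c t k * (starRingEnd ℂ) (c t k) := by
  have hd : (d : ℂ) ≠ 0 := Nat.cast_ne_zero.mpr (NeZero.ne d)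
  have hcd : (starRingEnd ℂ) (1 / (d : ℂ)) = 1 / (d : ℂ) := by
    simp [map_div₀, Complex.conj_natCast]
  have key : ∀ t : ZMod d,
      ∑ m : ZMod d, ((∑ k : ZMod d, c t k * omegaRoot d ^ (-((m.val * k.val : ℕ) : ℤ)))
        * (starRingEnd ℂ) (∑ k : ZMod d, c t k * omegaRoot d ^ (-((m.val * k.val : ℕ) : ℤ))))
      = (d : ℂ) * ∑ k : ZMod d, c t k * (starRingEnd ℂ) (c t k) := by
    intro t
    have hconj : ∀ m : ZMod d,
        (starRingEnd ℂ) (∑ k : ZMod d, c t k * omegaRoot d ^ (-((m.val * k.val : ℕ) : ℤ)))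
        = ∑ k : ZMod d, (starRingEnd ℂ) (c t k) * omegaRoot d ^ ((m.val * k.val : ℕ) : ℤ) := by
      intro m
      rw [map_sum]
      refine Finset.sum_congr rfl (fun k _ => ?_)
      rw [_root_.map_mul, conj_omega_zpow, neg_neg]
    simp only [hconj, Finset.sum_mul_sum]
    rw [Finset.sum_comm]
    have hswap2 : ∀ k : ZMod d,
        (∑ m : ZMod d, ∑ k' : ZMod d, (c t k * omegaRoot d ^ (-((m.val * k.val : ℕ) : ℤ)))
          * ((starRingEnd ℂ) (c t k') * omegaRoot d ^ ((m.val * k'.val : ℕ) : ℤ)))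
        = ∑ k' : ZMod d, ∑ m : ZMod d, (c t k * omegaRoot d ^ (-((m.val * k.val : ℕ) : ℤ)))
          * ((starRingEnd ℂ) (c t k') * omegaRoot d ^ ((m.val * k'.val : ℕ) : ℤ)) :=
      fun k => Finset.sum_comm
    simp only [hswap2]
    have inner : ∀ k k' : ZMod d,
        ∑ m : ZMod d, (c t k * omegaRoot d ^ (-((m.val * k.val : ℕ) : ℤ)))
          * ((starRingEnd ℂ) (c t k') * omegaRoot d ^ ((m.val * k'.val : ℕ) : ℤ))
        = c t k * (starRingEnd ℂ) (c t k') * (if k' - k = 0 then (d : ℂ) else 0) := by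
      intro k k'
      have hterm : ∀ m : ZMod d,
          (c t k * omegaRoot d ^ (-((m.val * k.val : ℕ) : ℤ)))
            * ((starRingEnd ℂ) (c t k') * omegaRoot d ^ ((m.val * k'.val : ℕ) : ℤ))
          = c t k * (starRingEnd ℂ) (c t k')
            * omegaRoot d ^ ((k' - k).val * m.val) := by
        intro m
        rw [mul_mul_mul_comm, ← zpow_add₀ (omega_ne_zero d)]
        congr 1
        rw [← zpow_natCast (omegaRoot d) ((k' - k).val * m.val)]
        apply omega_zpow_congr
        push_cast [ZMod.natCast_val, ZMod.cast_id]
        ring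
      simp only [hterm]
      rw [← Finset.mul_sum, sum_omega_pow d (k' - k)]
    simp only [inner]
    have collapse : ∀ k : ZMod d,
        ∑ k' : ZMod d, c t k * (starRingEnd ℂ) (c t k') * (if k' - k = 0 then (d : ℂ) else 0)
        = c t k * (starRingEnd ℂ) (c t k) * (d : ℂ) := by
      intro k
      rw [Finset.sum_eq_single k]
      · rw [if_pos (sub_self k)]
      · intro b _ hb
        rw [if_neg (sub_ne_zero.mpr hb), mul_zero]
      · intro h; exact absurd (Finset.mem_univ _) h
    simp only [collapse]
    rw [← Finset.sum_mul, mul_comm]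
  have h0 : (Trec d c * (Trec d c)ᴴ).trace
      = ∑ m : ZMod d, ∑ n : ZMod d, Trec d c m n * (starRingEnd ℂ) (Trec d c m n) := by
    simp only [Matrix.trace, Matrix.diag_apply, Matrix.mul_apply, Matrix.conjTranspose_apply,
      star_def]
  rw [h0]
  have h1' : ∀ m : ZMod d,
      ∑ n : ZMod d, Trec d c m n * (starRingEnd ℂ) (Trec d c m n)
      = ∑ t : ZMod d, Trec d c m (m + t) * (starRingEnd ℂ) (Trec d c m (m + t)) :=
    fun m => (Fintype.sum_equiv (Equiv.addLeft m) _ _ (fun t => rfl)).symm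
  simp only [h1']
  rw [Finset.sum_comm]
  have h2' : ∀ (m t : ZMod d), Trec d c m (m + t)
      = (1 / (d : ℂ)) * ∑ k : ZMod d, c t k * omegaRoot d ^ (-((m.val * k.val : ℕ) : ℤ)) := by
    intro m t
    rw [Trec_apply, add_sub_cancel_left]
  simp only [h2']
  have h3' : ∀ (X : ℂ), (1 / (d : ℂ) * X) * (starRingEnd ℂ) (1 / (d : ℂ) * X)
      = (1 / (d : ℂ) * (1 / (d : ℂ))) * (X * (starRingEnd ℂ) X) := by
    intro X
    rw [_root_.map_mul, hcd]
    ring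
  simp only [h3']
  simp only [← Finset.mul_sum]
  rw [Finset.sum_congr rfl (fun t _ => key t), ← Finset.mul_sum]
  field_simp

lemma sum_c_normSq (c : Matrix (ZMod d) (ZMod d) ℂ)
    (h2 : c 0 0 = 1)
    (h3 : ∀ j k : ZMod d, (j, k) ≠ (0, 0) → ‖c j k‖ ^ 2 = 1 / (d + 1)) :
    ∑ t : ZMod d, ∑ k : ZMod d, c t k * (starRingEnd ℂ) (c t k) = (d : ℂ) := by
  have hd1 : (1 : ℕ) ≤ d := Nat.one_le_iff_ne_zero.mpr (NeZero.ne d)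
  have hR : ∑ t : ZMod d, ∑ k : ZMod d, Complex.normSq (c t k) = (d : ℝ) := by
    rw [← Finset.sum_product']
    have hmem : ((0 : ZMod d), (0 : ZMod d)) ∈ (Finset.univ ×ˢ Finset.univ :
        Finset (ZMod d × ZMod d)) := by simp
    rw [← Finset.sum_erase_add _ _ hmem]
    have h00 : Complex.normSq (c 0 0) = 1 := by rw [h2]; simp
    have hrest : ∀ p ∈ (Finset.univ ×ˢ Finset.univ :
        Finset (ZMod d × ZMod d)).erase (0, 0),
        Complex.normSq (c p.1 p.2) = 1 / ((d : ℝ) + 1) := by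
      intro p hp
      have hne : (p.1, p.2) ≠ (0, 0) := by
        have := Finset.ne_of_mem_erase hp
        simpa using this
      rw [← Complex.sq_norm, h3 p.1 p.2 hne]
    rw [Finset.sum_congr rfl hrest, Finset.sum_const, h00]
    have hcard : ((Finset.univ ×ˢ Finset.univ :
        Finset (ZMod d × ZMod d)).erase (0, 0)).card = d * d - 1 := by
      rw [Finset.card_erase_of_mem hmem, Finset.card_product]
      simp [ZMod.card]
    rw [hcard, nsmul_eq_mul]
    have hc1 : ((d * d - 1 : ℕ) : ℝ) = (d : ℝ) * d - 1 := by
      have : 1 ≤ d * d := Nat.one_le_iff_ne_zero.mpr (by positivity)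
      push_cast [Nat.cast_sub this]
      ring
    have hdd : (d : ℝ) + 1 ≠ 0 := by positivity
    rw [hc1]
    field_simp
    ring
  simp only [Complex.mul_conj]
  exact_mod_cast hR

lemma trace_pow_eq (A : Matrix (ZMod d) (ZMod d) ℂ) (hA : A.IsHermitian) (k : ℕ) :
    (A ^ k).trace = ∑ i : ZMod d, ((hA.eigenvalues i : ℝ) : ℂ) ^ k := by
  set U := (hA.eigenvectorUnitary : Matrix (ZMod d) (ZMod d) ℂ) with hUdef
  set D := Matrix.diagonal ((RCLike.ofReal ∘ hA.eigenvalues) : ZMod d → ℂ) with hDdef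
  have hUU : star U * U = 1 := Unitary.coe_star_mul_self _
  have hUU' : U * star U = 1 := Unitary.coe_mul_star_self _
  have hpow : A ^ k = U * D ^ k * star U := by
    induction k with
    | zero => rw [pow_zero, pow_zero, Matrix.mul_one, hUU']
    | succ n ih =>
      rw [pow_succ, ih]
      conv_lhs => rw [hA.spectral_theorem]
      show U * D ^ n * star U * (U * D * star U) = _
      have hmid : star U * (U * (D * star U)) = D * star U := by
        rw [← Matrix.mul_assoc, hUU, Matrix.one_mul]
      simp only [Matrix.mul_assoc]
      rw [hmid, ← Matrix.mul_assoc (D ^ n) D, ← pow_succ]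
  rw [hpow, Matrix.trace_mul_cycle, hUU, Matrix.one_mul, hDdef,
    Matrix.diagonal_pow, Matrix.trace_diagonal]
  rfl

lemma exists_one_hot (μ : ZMod d → ℝ)
    (hs1 : ∑ i : ZMod d, μ i = 1)
    (hs2 : ∑ i : ZMod d, (μ i) ^ 2 = 1)
    (hs4 : ∑ i : ZMod d, (μ i) ^ 4 = 1) :
    ∃ i₀ : ZMod d, μ i₀ = 1 ∧ ∀ j : ZMod d, j ≠ i₀ → μ j = 0 := by
  have hexpand : (1 : ℝ) = ∑ i : ZMod d, ∑ j : ZMod d, (μ i) ^ 2 * (μ j) ^ 2 := by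
    rw [← Finset.sum_mul_sum, hs2, one_mul]
  have hsplit : ∀ i : ZMod d, ∑ j : ZMod d, (μ i) ^ 2 * (μ j) ^ 2
      = (∑ j ∈ Finset.univ.erase i, (μ i) ^ 2 * (μ j) ^ 2) + (μ i) ^ 2 * (μ i) ^ 2 :=
    fun i => (Finset.sum_erase_add _ _ (Finset.mem_univ i)).symm
  have hs4' : ∑ i : ZMod d, (μ i) ^ 2 * (μ i) ^ 2 = 1 := by
    rw [← hs4]
    exact Finset.sum_congr rfl (fun i _ => by ring)
  rw [Finset.sum_congr rfl (fun i _ => hsplit i), Finset.sum_add_distrib, hs4'] at hexpand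
  have hoff : ∑ i : ZMod d, ∑ j ∈ Finset.univ.erase i, (μ i) ^ 2 * (μ j) ^ 2 = 0 := by
    linarith
  have hkey : ∀ i j : ZMod d, j ≠ i → μ i * μ j = 0 := by
    intro i j hij
    have h1 := (Finset.sum_eq_zero_iff_of_nonneg (fun i _ =>
      Finset.sum_nonneg (fun j _ => by positivity))).mp hoff i (Finset.mem_univ i)
    have h2 := (Finset.sum_eq_zero_iff_of_nonneg (fun j _ => by positivity)).mp h1 j
      (Finset.mem_erase.mpr ⟨hij, Finset.mem_univ j⟩)
    have h3 : (μ i * μ j) ^ 2 = 0 := by rw [mul_pow]; exact h2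
    exact pow_eq_zero_iff (by norm_num) |>.mp h3
  have hne : ∃ i₀ : ZMod d, μ i₀ ≠ 0 := by
    by_contra h
    push_neg at h
    rw [Finset.sum_congr rfl (fun i _ => h i)] at hs1
    simp at hs1
  obtain ⟨i₀, hi₀⟩ := hne
  have hzero : ∀ j : ZMod d, j ≠ i₀ → μ j = 0 := by
    intro j hj
    rcases mul_eq_zero.mp (hkey i₀ j hj) with h | h
    · exact absurd h hi₀
    · exact h
  refine ⟨i₀, ?_, hzero⟩
  rw [Finset.sum_eq_single i₀ (fun b _ hb => hzero b hb)
    (fun h => absurd (Finset.mem_univ _) h)] at hs1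
  exact hs1

lemma charpoly_unitary_conj (U B : Matrix (ZMod d) (ZMod d) ℂ)
    (h : U * star U = 1) : (U * B * star U).charpoly = B.charpoly := by
  classical
  have hUU : star U * U = 1 := mul_eq_one_comm.mp h
  have hmapmul : ∀ (M N : Matrix (ZMod d) (ZMod d) ℂ),
      (M * N).map (Polynomial.C : ℂ → Polynomial ℂ)
        = M.map Polynomial.C * N.map Polynomial.C :=
    fun M N => Matrix.map_mul (f := (Polynomial.C : ℂ →+* Polynomial ℂ))
  have hmap1 : ((1 : Matrix (ZMod d) (ZMod d) ℂ)).map (Polynomial.C : ℂ → Polynomial ℂ) = 1 :=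
    Matrix.map_one _ (map_zero _) (map_one _)
  have key : (U.map Polynomial.C) * B.charmatrix * ((star U).map Polynomial.C)
      = (U * B * star U).charmatrix := by
    rw [Matrix.charmatrix, Matrix.charmatrix, RingHom.mapMatrix_apply, RingHom.mapMatrix_apply, hmapmul, hmapmul]
    rw [Matrix.mul_sub, Matrix.sub_mul]
    congr 1
    · have hcomm : U.map Polynomial.C * Matrix.scalar (ZMod d) (Polynomial.X : Polynomial ℂ)
          = Matrix.scalar (ZMod d) (Polynomial.X : Polynomial ℂ) * U.map Polynomial.C :=
        (Matrix.scalar_commute _ (fun r => Commute.all _ r) _).symm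
      rw [hcomm, Matrix.mul_assoc, ← hmapmul, h, hmap1, Matrix.mul_one]
  have hdet1 : (U.map Polynomial.C).det * ((star U).map Polynomial.C).det = 1 := by
    rw [mul_comm, ← Matrix.det_mul, ← hmapmul, hUU, hmap1, Matrix.det_one]
  rw [Matrix.charpoly, Matrix.charpoly, ← key, Matrix.det_mul, Matrix.det_mul]
  rw [mul_comm ((U.map Polynomial.C).det), mul_assoc]
  rw [hdet1, mul_one]

lemma charpoly_one_hot (i₀ : ZMod d) :
    (Matrix.diagonal (fun b : ZMod d => if b = i₀ then (1 : ℂ) else 0)).charpoly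
      = Polynomial.X ^ d - Polynomial.X ^ (d - 1) := by
  have hd1 : 1 ≤ d := Nat.one_le_iff_ne_zero.mpr (NeZero.ne d)
  have hcm : (Matrix.diagonal (fun b : ZMod d => if b = i₀ then (1 : ℂ) else 0)).charmatrix
      = Matrix.diagonal
          (fun b : ZMod d => Polynomial.X - Polynomial.C (if b = i₀ then (1 : ℂ) else 0)) := by
    ext i j
    by_cases hij : i = j
    · subst hij
      rw [Matrix.charmatrix_apply_eq, Matrix.diagonal_apply_eq, Matrix.diagonal_apply_eq]
    · rw [Matrix.charmatrix_apply_ne _ _ _ hij, Matrix.diagonal_apply_ne _ hij,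
        Matrix.diagonal_apply_ne _ hij, map_zero, neg_zero]
  rw [Matrix.charpoly, hcm, Matrix.det_diagonal]
  rw [← Finset.mul_prod_erase _ _ (Finset.mem_univ i₀)]
  have h1 : ∀ b ∈ Finset.univ.erase i₀,
      Polynomial.X - Polynomial.C (if b = i₀ then (1 : ℂ) else 0) = Polynomial.X := by
    intro b hb
    rw [if_neg (Finset.mem_erase.mp hb).1, map_zero, sub_zero]
  rw [Finset.prod_congr rfl h1, Finset.prod_const, if_pos rfl, Polynomial.C_1]
  have hcard : (Finset.univ.erase i₀).card = d - 1 := by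
    rw [Finset.card_erase_of_mem (Finset.mem_univ _), Finset.card_univ, ZMod.card]
  rw [hcard, sub_mul, one_mul, ← pow_succ', Nat.sub_add_cancel hd1]

theorem stmt4 (d : ℕ) [NeZero d] (hd : 2 ≤ d) (c : Matrix (ZMod d) (ZMod d) ℂ)
    (h1 : ∀ j k : ZMod d,
      c j k = omegaRoot d ^ (-((j.val : ℤ) * (k.val : ℤ))) * (starRingEnd ℂ) (c (-j) (-k)))
    (h2 : c 0 0 = 1)
    (h3 : ∀ j k : ZMod d, (j, k) ≠ (0, 0) → ‖c j k‖ ^ 2 = 1 / (d + 1))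
    (h4 : ((Trec d c) ^ 4).trace = 1) :
    ∃ v : ZMod d → ℂ,
      (∑ r : ZMod d, ‖v r‖ ^ 2) = 1 ∧
      Trec d c = Matrix.vecMulVec v (star v) ∧
      (Trec d c).charpoly = Polynomial.X ^ d - Polynomial.X ^ (d - 1) := by
  have hd0 : (d : ℂ) ≠ 0 := Nat.cast_ne_zero.mpr (NeZero.ne d)
  set A := Trec d c with hAdef
  have hA : A.IsHermitian := Trec_isHermitian d c h1
  have htr1 : A.trace = 1 := by rw [hAdef, Trec_trace, h2]
  have htr2 : (A ^ 2).trace = 1 := by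
    have hmc := Trec_mul_conj_trace d c
    rw [sum_c_normSq d c h2 h3] at hmc
    rw [pow_two]
    nth_rewrite 2 [← hA]
    rw [← hAdef] at hmc
    rw [hmc]
    field_simp
  have e1 : ∑ i : ZMod d, hA.eigenvalues i = 1 := by
    have := trace_pow_eq d A hA 1
    simp only [pow_one] at this
    rw [htr1] at this
    exact_mod_cast this.symm
  have e2 : ∑ i : ZMod d, hA.eigenvalues i ^ 2 = 1 := by
    have := trace_pow_eq d A hA 2
    rw [htr2] at this
    exact_mod_cast this.symm
  have e4 : ∑ i : ZMod d, hA.eigenvalues i ^ 4 = 1 := by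
    have := trace_pow_eq d A hA 4
    rw [h4] at this
    exact_mod_cast this.symm
  obtain ⟨i₀, hμ1, hμ0⟩ := exists_one_hot d hA.eigenvalues e1 e2 e4
  set U := (hA.eigenvectorUnitary : Matrix (ZMod d) (ZMod d) ℂ) with hUdef
  have hUU' : U * star U = 1 := Unitary.coe_mul_star_self _
  have hUU : star U * U = 1 := Unitary.coe_star_mul_self _
  have hf : (RCLike.ofReal ∘ hA.eigenvalues : ZMod d → ℂ)
      = fun b => if b = i₀ then 1 else 0 := by
    funext b
    by_cases hb : b = i₀
    · subst hb
      simp [Function.comp, hμ1]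
    · simp [Function.comp, hb, hμ0 b hb]
  set v : ZMod d → ℂ := fun r => U r i₀ with hv
  have hUD : ∀ m j : ZMod d,
      (U * Matrix.diagonal (fun b : ZMod d => if b = i₀ then (1 : ℂ) else 0)) m j
        = if j = i₀ then U m i₀ else 0 := by
    intro m j
    rw [Matrix.mul_diagonal]
    by_cases hj : j = i₀
    · subst hj; simp
    · simp [hj]
  have hAeq : A = Matrix.vecMulVec v (star v) := by
    nth_rewrite 1 [hA.spectral_theorem]
    rw [Unitary.conjStarAlgAut_apply, hf, ← hUdef]
    ext m n
    rw [Matrix.vecMulVec_apply, Matrix.mul_apply]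
    rw [Finset.sum_eq_single i₀]
    · rw [hUD, if_pos rfl, Matrix.star_apply, Pi.star_apply]
    · intro b _ hb
      rw [hUD, if_neg hb, zero_mul]
    · intro h; exact absurd (Finset.mem_univ _) h
  have hnorm : ∑ r : ZMod d, ‖v r‖ ^ 2 = 1 := by
    have h11 : (star U * U) i₀ i₀ = 1 := by rw [hUU, Matrix.one_apply_eq]
    rw [Matrix.mul_apply] at h11
    have h12 : ∀ j : ZMod d, (star U) i₀ j * U j i₀
        = ((‖v j‖ ^ 2 : ℝ) : ℂ) := by
      intro j
      rw [Matrix.star_apply, star_def, mul_comm, Complex.mul_conj, ← Complex.sq_norm]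
    rw [Finset.sum_congr rfl (fun j _ => h12 j)] at h11
    exact_mod_cast h11
  refine ⟨v, hnorm, hAeq, ?_⟩
  have hchar : A.charpoly
      = (Matrix.diagonal (fun b : ZMod d => if b = i₀ then (1 : ℂ) else 0)).charpoly := by
    conv_lhs => rw [hA.spectral_theorem, Unitary.conjStarAlgAut_apply, hf, ← hUdef]
    exact charpoly_unitary_conj d U _ hUU'
  rw [hchar, charpoly_one_hot d i₀]
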